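/- Let I ⊆ ℝ be an open interval, V : ℝ → ℝ a function, and ε_k, ε_l real constants with ε_k < ε_l. Suppose w_k, w_l : ℝ → ℝ are differentiable on I, satisfy the Riccati equations w_k'(x) + w_k(x)^2 = V(x) - ε_k and w_l'(x) + w_l(x)^2 = V(x) - ε_l for all x ∈ I, and w_k(x) ≠ w_l(x) for all x ∈ I. Then the function w_{kl}(x) = -w_k(x) - (ε_k - ε_l)/(w_k(x) - w_l(x)) is differentiable on I and satisfies w_{kl}'(x) + w_{kl}(x)^2 = V(x) - 2·w_k'(x) - ε_l for all x ∈ I. -/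

import Mathlib

/-- **Finite difference Bäcklund algorithm.**
If `w_k`, `w_l` solve the Riccati equations `w' + w² = V - ε_k` and
`w' + w² = V - ε_l` on an open interval `I`, with `ε_k < ε_l` and
`w_k ≠ w_l` pointwise on `I`, then
`w_kl = -w_k - (ε_k - ε_l)/(w_k - w_l)` is differentiable on `I` and solves
`w' + w² = V - 2 w_k' - ε_l` on `I`. -/
theorem finite_difference_backlund
    (I : Set ℝ) (hI : IsOpen I) (hIint : I.OrdConnected)
    (V : ℝ → ℝ) (εk εl : ℝ) (hε : εk < εl)
    (wk wl wk' wl' : ℝ → ℝ)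
    (hwk : ∀ x ∈ I, HasDerivAt wk (wk' x) x)
    (hwl : ∀ x ∈ I, HasDerivAt wl (wl' x) x)
    (hRk : ∀ x ∈ I, wk' x + (wk x) ^ 2 = V x - εk)
    (hRl : ∀ x ∈ I, wl' x + (wl x) ^ 2 = V x - εl)
    (hne : ∀ x ∈ I, wk x ≠ wl x) :
    ∀ x ∈ I,
      HasDerivAt (fun y => -wk y - (εk - εl) / (wk y - wl y))
        ((V x - 2 * wk' x - εl)
          - (-wk x - (εk - εl) / (wk x - wl x)) ^ 2) x := by
  intro x hx
  have hd : wk x - wl x ≠ 0 := sub_ne_zero.2 (hne x hx)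
  have h1 := hwk x hx
  have h2 := hwl x hx
  have H := h1.neg.sub ((hasDerivAt_const x (εk - εl)).div (h1.sub h2) hd)
  convert H using 1
  · rfl
  · rfl
  · rfl
  have hk' : wk' x = V x - εk - wk x ^ 2 := by have := hRk x hx; linarith
  have hl' : wl' x = V x - εl - wl x ^ 2 := by have := hRl x hx; linarith
  rw [hk', hl', Pi.sub_apply]
  field_simp
  ring
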